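/- Let H = ℓ²(ℤ;ℂ) with standard orthonormal basis (δ_n)_{n∈ℤ}, and let S₁, S₂ ∈ B(H) be the bounded operators determined by S₁δ_n = δ_{2n} and S₂δ_n = δ_{2n+1} for n ∈ ℤ. Let U ∈ B(H) be unitary (U*U = UU* = I). Then the following are equivalent: (i) for every x ∈ B(H), U(S₁xS₁* + S₂xS₂*)U* = S₁(UxU*)S₁* + S₂(UxU*)S₂*; (ii) there exist λ, μ ∈ ℂ with |λ| = |μ| = 1 such that either Uδ_n = λδ_n for all n ≥ 0 and Uδ_n = μδ_n for all n ≤ −1, or Uδ_n = λδ_{−n−1} for all n ≥ 0 and Uδ_n = μδ_{−n−1} for all n ≤ −1. -/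

import Mathlib

open scoped ENNReal
open ContinuousLinearMap

noncomputable section

/-- `ℓ²(Λ; H)`: square-summable `H`-valued families indexed by `Λ`. -/
abbrev L2 (Λ : Type*) (H : Type*) [NormedAddCommGroup H] [InnerProductSpace ℂ H] :
    Type _ :=
  lp (fun _ : Λ => H) 2

variable {Λ H : Type*} [NormedAddCommGroup H] [InnerProductSpace ℂ H]

open Classical in
/-- `ξ ⊗ e_w`: the element of `ℓ²(Λ;H)` supported at `w` with value `ξ`. -/
def el (w : Λ) (ξ : H) : L2 Λ H := lp.single 2 w ξ

open Classical in
/-- `ξ ↦ ξ ⊗ e_w` as a continuous linear map. -/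
def elCLM (w : Λ) : H →L[ℂ] L2 Λ H :=
  LinearMap.mkContinuous
    { toFun := fun ξ => el w ξ
      map_add' := by
        intro ξ η
        apply lp.ext
        funext j
        by_cases h : j = w
        · subst h; simp [el, lp.single_apply_self]
        · simp [el, lp.single_apply_ne _ _ _ h]
      map_smul' := by
        intro c ξ
        simp [el, lp.single_smul] }
    1
    (by
      intro ξ
      simp only [LinearMap.coe_mk, AddHom.coe_mk, one_mul]
      exact le_of_eq (by simp only [el]; exact lp.norm_single (E := fun _ : Λ => H) (p := 2) (by norm_num) w ξ))

/-- Evaluation at coordinate `w` as a continuous linear map. -/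
def coordCLM (w : Λ) : L2 Λ H →L[ℂ] H :=
  LinearMap.mkContinuous
    { toFun := fun f => f w
      map_add' := by intro f g; simp
      map_smul' := by intro c f; simp }
    1
    (by
      intro f
      rw [one_mul]; exact lp.norm_apply_le_norm (p := 2) (by norm_num) f w)

/-- The `(μ,ν)` matrix entry of an operator on `ℓ²(Λ;H)`. -/
def entry (T : L2 Λ H →L[ℂ] L2 Λ H) (μ ν : Λ) : H →L[ℂ] H :=
  (coordCLM μ).comp (T.comp (elCLM ν))

/-- Membership in the closure of `S` for the weak operator topology. -/
def InWOTClosure {E : Type*} [NormedAddCommGroup E] [InnerProductSpace ℂ E]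
    (S : Set (E →L[ℂ] E)) (T : E →L[ℂ] E) : Prop :=
  ∀ ε > (0 : ℝ), ∀ (n : ℕ) (ξ η : Fin n → E),
    ∃ A ∈ S, ∀ i, ‖(inner ℂ ((T - A) (ξ i)) (η i) : ℂ)‖ < ε

/-- The closure of `S` in the weak operator topology. -/
def wotClosure {E : Type*} [NormedAddCommGroup E] [InnerProductSpace ℂ E]
    (S : Set (E →L[ℂ] E)) : Set (E →L[ℂ] E) :=
  { T | InWOTClosure S T }

/-- A set of operators is WOT-closed. -/
def IsWOTClosed {E : Type*} [NormedAddCommGroup E] [InnerProductSpace ℂ E]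
    (S : Set (E →L[ℂ] E)) : Prop :=
  wotClosure S ⊆ S

/-- A set `S` of operators is reflexive if any operator `T` such that `T h` lies in the
norm-closure of `S h` for every vector `h` belongs to `S`. -/
def IsReflexiveSet {E : Type*} [NormedAddCommGroup E] [InnerProductSpace ℂ E]
    (S : Set (E →L[ℂ] E)) : Prop :=
  ∀ T : E →L[ℂ] E, (∀ h : E, T h ∈ closure ((fun A : E →L[ℂ] E => A h) '' S)) → T ∈ S

/-- The WOT-closed linear span of a set of operators. -/
def wotSpan {E : Type*} [NormedAddCommGroup E] [InnerProductSpace ℂ E]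
    (S : Set (E →L[ℂ] E)) : Set (E →L[ℂ] E) :=
  wotClosure ((Submodule.span ℂ S : Submodule ℂ (E →L[ℂ] E)) : Set (E →L[ℂ] E))

/-- The reversed word. -/
def rev {ι : Type*} (μ : FreeMonoid ι) : FreeMonoid ι :=
  FreeMonoid.ofList (FreeMonoid.toList μ).reverse

/-- Length of a word. -/
def len {ι : Type*} (μ : FreeMonoid ι) : ℕ := (FreeMonoid.toList μ).length

/-- For `α : ι → (X → X)` and a word `μ = μ_m ⋯ μ_1`, the composition
`α_μ = α_{μ_m} ∘ ⋯ ∘ α_{μ_1}`. -/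
def wordMap {ι X : Type*} (α : ι → X → X) (μ : FreeMonoid ι) : X → X :=
  ((FreeMonoid.toList μ).map α).foldr (· ∘ ·) id

/-- For commuting maps `α_1,…,α_d` and `n ∈ ℕ^d`, the composition
`α^n = α_1^{n_1} ∘ ⋯ ∘ α_d^{n_d}`. -/
def multiIter {X : Type*} {d : ℕ} (α : Fin d → X → X) (n : Fin d → ℕ) : X → X :=
  (List.ofFn fun i => (α i)^[n i]).foldr (· ∘ ·) id

/-- The commutant of a set of operators. -/
def commutantS {E : Type*} [NormedAddCommGroup E] [InnerProductSpace ℂ E]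
    (S : Set (E →L[ℂ] E)) : Set (E →L[ℂ] E) :=
  { T | ∀ s ∈ S, T * s = s * T }


section MyAux19

lemma el_eq_single (q : ℤ) (ξ : ℂ) : (el q ξ : L2 ℤ ℂ) = lp.single 2 q ξ := by
  rw [el]
  congr!

lemma coord_inner (v : L2 ℤ ℂ) (p : ℤ) : (v : ∀ _ : ℤ, ℂ) p = inner ℂ (el p (1:ℂ)) v := by
  rw [el_eq_single, lp.inner_single_left]
  simp

lemma el_apply (q p : ℤ) : (el q (1:ℂ) : ∀ _:ℤ, ℂ) p = if p = q then 1 else 0 := by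
  rw [el_eq_single, lp.single_apply]
  split_ifs with h <;> simp [h]

lemma norm_el (q : ℤ) : ‖el q (1:ℂ)‖ = 1 := by
  rw [el_eq_single]
  simpa using lp.norm_single (p := 2) (by norm_num) (fun _ : ℤ => (1:ℂ)) q

lemma ext_el {F : Type*} [NormedAddCommGroup F] [NormedSpace ℂ F]
    (A B : L2 ℤ ℂ →L[ℂ] F) (h : ∀ q : ℤ, A (el q 1) = B (el q 1)) : A = B := by
  ext v
  have hv : HasSum (fun q : ℤ => lp.single 2 q ((v : ∀ _:ℤ, ℂ) q)) v :=
    lp.hasSum_single (by norm_num) v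
  have key : ∀ q : ℤ, A (lp.single 2 q ((v : ∀ _:ℤ, ℂ) q)) = B (lp.single 2 q ((v : ∀ _:ℤ, ℂ) q)) := by
    intro q
    have h1 : lp.single 2 q ((v : ∀ _:ℤ, ℂ) q) = (v : ∀ _:ℤ, ℂ) q • el q (1:ℂ) := by
      rw [el_eq_single, ← lp.single_smul]
      norm_num
    rw [h1, A.map_smul, B.map_smul, h q]
  have hA := hv.mapL A
  have hB := hv.mapL B
  rw [funext key] at hA
  exact hA.unique hB

section ops
variable (S1 S2 : L2 ℤ ℂ →L[ℂ] L2 ℤ ℂ)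
variable (hS1 : ∀ n : ℤ, S1 (el n (1 : ℂ)) = el (2 * n) (1 : ℂ))
variable (hS2 : ∀ n : ℤ, S2 (el n (1 : ℂ)) = el (2 * n + 1) (1 : ℂ))

include hS1 in
lemma adj1_coord (x : L2 ℤ ℂ) (p : ℤ) :
    ((ContinuousLinearMap.adjoint S1 x : L2 ℤ ℂ) : ∀ _:ℤ, ℂ) p = (x : ∀ _:ℤ, ℂ) (2*p) := by
  rw [coord_inner, ContinuousLinearMap.adjoint_inner_right, hS1, ← coord_inner]

include hS2 in
lemma adj2_coord (x : L2 ℤ ℂ) (p : ℤ) :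
    ((ContinuousLinearMap.adjoint S2 x : L2 ℤ ℂ) : ∀ _:ℤ, ℂ) p = (x : ∀ _:ℤ, ℂ) (2*p+1) := by
  rw [coord_inner, ContinuousLinearMap.adjoint_inner_right, hS2, ← coord_inner]

include hS1 in
lemma S1_coord_even (v : L2 ℤ ℂ) (n : ℤ) :
    ((S1 v : L2 ℤ ℂ) : ∀ _:ℤ, ℂ) (2*n) = (v : ∀ _:ℤ, ℂ) n := by
  have hadj : ContinuousLinearMap.adjoint S1 (el (2*n) (1:ℂ)) = el n 1 := by
    apply lp.ext; funext q
    rw [adj1_coord S1 hS1, el_apply, el_apply]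
    congr 1
    simp only [eq_iff_iff]
    omega
  rw [coord_inner, ← ContinuousLinearMap.adjoint_inner_left, hadj, ← coord_inner]

include hS1 in
lemma S1_coord_odd (v : L2 ℤ ℂ) (p : ℤ) (hp : p % 2 = 1 ∨ p % 2 = -1) :
    ((S1 v : L2 ℤ ℂ) : ∀ _:ℤ, ℂ) p = 0 := by
  have hadj : ContinuousLinearMap.adjoint S1 (el p (1:ℂ)) = 0 := by
    apply lp.ext; funext q
    rw [adj1_coord S1 hS1, el_apply]
    have : p ≠ 2*q := by omega
    simp [this]
    omega
  rw [coord_inner, ← ContinuousLinearMap.adjoint_inner_left, hadj]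
  simp

include hS2 in
lemma S2_coord_odd (v : L2 ℤ ℂ) (n : ℤ) :
    ((S2 v : L2 ℤ ℂ) : ∀ _:ℤ, ℂ) (2*n+1) = (v : ∀ _:ℤ, ℂ) n := by
  have hadj : ContinuousLinearMap.adjoint S2 (el (2*n+1) (1:ℂ)) = el n 1 := by
    apply lp.ext; funext q
    rw [adj2_coord S2 hS2, el_apply, el_apply]
    congr 1
    simp only [eq_iff_iff]
    omega
  rw [coord_inner, ← ContinuousLinearMap.adjoint_inner_left, hadj, ← coord_inner]

include hS2 in
lemma S2_coord_even (v : L2 ℤ ℂ) (p : ℤ) (hp : p % 2 = 0) :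
    ((S2 v : L2 ℤ ℂ) : ∀ _:ℤ, ℂ) p = 0 := by
  have hadj : ContinuousLinearMap.adjoint S2 (el p (1:ℂ)) = 0 := by
    apply lp.ext; funext q
    rw [adj2_coord S2 hS2, el_apply]
    have : p ≠ 2*q+1 := by omega
    simp [this]
    omega
  rw [coord_inner, ← ContinuousLinearMap.adjoint_inner_left, hadj]
  simp

include hS1 in
lemma Sd1S1 : ContinuousLinearMap.adjoint S1 * S1 = 1 := by
  ext v p
  rw [ContinuousLinearMap.mul_apply, adj1_coord S1 hS1, S1_coord_even S1 hS1]
  rfl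

include hS2 in
lemma Sd2S2 : ContinuousLinearMap.adjoint S2 * S2 = 1 := by
  ext v p
  rw [ContinuousLinearMap.mul_apply, adj2_coord S2 hS2, S2_coord_odd S2 hS2]
  rfl

include hS1 hS2 in
lemma Sd1S2 : ContinuousLinearMap.adjoint S1 * S2 = 0 := by
  ext v p
  rw [ContinuousLinearMap.mul_apply, adj1_coord S1 hS1, S2_coord_even S2 hS2 _ _ (by omega)]
  rfl

include hS1 hS2 in
lemma Sd2S1 : ContinuousLinearMap.adjoint S2 * S1 = 0 := by
  ext v p
  rw [ContinuousLinearMap.mul_apply, adj2_coord S2 hS2, S1_coord_odd S1 hS1 _ _ (by omega)]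
  rfl

include hS1 hS2 in
lemma Srange : S1 * ContinuousLinearMap.adjoint S1 + S2 * ContinuousLinearMap.adjoint S2 = 1 := by
  ext v p
  rw [ContinuousLinearMap.add_apply, lp.coeFn_add, Pi.add_apply,
    ContinuousLinearMap.mul_apply, ContinuousLinearMap.mul_apply]
  obtain ⟨n, hn | hn⟩ : ∃ n : ℤ, p = 2*n ∨ p = 2*n+1 := ⟨p/2, by omega⟩
  · subst hn
    rw [S1_coord_even S1 hS1, S2_coord_even S2 hS2 _ _ (by omega),
      adj1_coord S1 hS1]
    simp only [ContinuousLinearMap.one_apply, add_zero]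
  · subst hn
    rw [S2_coord_odd S2 hS2, S1_coord_odd S1 hS1 _ _ (by omega),
      adj2_coord S2 hS2]
    simp only [ContinuousLinearMap.one_apply, zero_add]

end ops

lemma inner_el_self (q : ℤ) : (inner ℂ (el q (1:ℂ)) (el q (1:ℂ)) : ℂ) = 1 := by
  rw [← coord_inner, el_apply]
  simp

lemma commute_all_scalar (R : L2 ℤ ℂ →L[ℂ] L2 ℤ ℂ) (h : ∀ y, R * y = y * R) :
    ∃ c : ℂ, R = c • 1 := by
  refine ⟨inner ℂ (el 0 (1:ℂ)) (R (el 0 1)), ContinuousLinearMap.ext fun ξ => ?_⟩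
  have hy := congrArg (fun A : L2 ℤ ℂ →L[ℂ] L2 ℤ ℂ => A (el 0 1))
    (h ((innerSL ℂ (el 0 (1:ℂ))).smulRight ξ))
  simp only [ContinuousLinearMap.mul_apply, ContinuousLinearMap.smulRight_apply,
    innerSL_apply_apply, inner_el_self, one_smul, map_smul] at hy
  rw [hy]
  simp

section unit
variable (U : L2 ℤ ℂ →L[ℂ] L2 ℤ ℂ)
variable (hU1 : ContinuousLinearMap.adjoint U * U = 1)

include hU1 in
lemma U_norm (v : L2 ℤ ℂ) : ‖U v‖ = ‖v‖ := by
  have h : (inner ℂ (U v) (U v) : ℂ) = inner ℂ v v := by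
    rw [← ContinuousLinearMap.adjoint_inner_left]
    have : ContinuousLinearMap.adjoint U (U v) = (ContinuousLinearMap.adjoint U * U) v := rfl
    rw [this, hU1, ContinuousLinearMap.one_apply]
  rw [inner_self_eq_norm_sq_to_K (𝕜 := ℂ), inner_self_eq_norm_sq_to_K (𝕜 := ℂ)] at h
  have h2 : ‖U v‖^2 = ‖v‖^2 := by exact_mod_cast h
  nlinarith [norm_nonneg (U v), norm_nonneg v]

include hU1 in
lemma U_ne_zero (v : L2 ℤ ℂ) (hv : v ≠ 0) : U v ≠ 0 := by
  intro h
  apply hv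
  have : (ContinuousLinearMap.adjoint U * U) v = v := by rw [hU1]; rfl
  rw [ContinuousLinearMap.mul_apply, h] at this
  simpa using this.symm

end unit


lemma chainLemma (u : ℤ → ℂ) (a b : ℂ)
    (r0 : ∀ n, u (2*n) = a * u n) (r1 : ∀ n, u (2*n+1) = b * u n) :
    ∀ p, u p ≠ 0 → (u 0 ≠ 0 ∨ u (-1) ≠ 0) := by
  have key : ∀ N : ℕ, ∀ p : ℤ, p.natAbs ≤ N → u p ≠ 0 → (u 0 ≠ 0 ∨ u (-1) ≠ 0) := by
    intro N
    induction N with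
    | zero =>
      intro p hp hu
      have : p = 0 := by omega
      subst this
      exact Or.inl hu
    | succ N ih =>
      intro p hp hu
      by_cases h0 : p = 0
      · subst h0; exact Or.inl hu
      by_cases h1 : p = -1
      · subst h1; exact Or.inr hu
      obtain ⟨n, hn | hn⟩ : ∃ n : ℤ, p = 2*n ∨ p = 2*n+1 := ⟨p/2, by omega⟩
      · subst hn
        rw [r0] at hu
        exact ih n (by omega) (fun h => hu (by rw [h, mul_zero]))
      · subst hn
        rw [r1] at hu
        exact ih n (by omega) (fun h => hu (by rw [h, mul_zero]))
  exact fun p => key p.natAbs p le_rfl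

lemma diagClaim (u : ℤ → ℤ → ℂ)
    (r00 : ∀ n m, u (2*n) (2*m) = u n m)
    (r10 : ∀ n m, u (2*n+1) (2*m) = 0)
    (r01 : ∀ n m, u (2*n) (2*m+1) = 0)
    (r11 : ∀ n m, u (2*n+1) (2*m+1) = u n m) :
    ∀ p q : ℤ, u p q = if p = q then (if 0 ≤ q then u 0 0 else u (-1) (-1)) else 0 := by
  have key : ∀ N : ℕ, ∀ p q : ℤ, p.natAbs + q.natAbs ≤ N →
      u p q = if p = q then (if 0 ≤ q then u 0 0 else u (-1) (-1)) else 0 := by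
    intro N
    induction N with
    | zero =>
      intro p q hpq
      have hp : p = 0 := by omega
      have hq : q = 0 := by omega
      subst hp; subst hq; simp
    | succ N ih =>
      intro p q hpq
      obtain ⟨n, hn | hn⟩ : ∃ n : ℤ, p = 2*n ∨ p = 2*n+1 := ⟨p/2, by omega⟩ <;>
        obtain ⟨m, hm | hm⟩ : ∃ m : ℤ, q = 2*m ∨ q = 2*m+1 := ⟨q/2, by omega⟩ <;>
        subst hn <;> subst hm
      · by_cases hz : n = 0 ∧ m = 0
        · obtain ⟨h1, h2⟩ := hz; subst h1; subst h2; simp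
        · rw [r00, ih n m (by omega)]
          by_cases hnm : n = m
          · subst hnm
            rw [if_pos rfl, if_pos rfl]
            by_cases h0 : 0 ≤ n
            · rw [if_pos h0, if_pos (by omega : (0:ℤ) ≤ 2*n)]
            · rw [if_neg h0, if_neg (by omega : ¬ (0:ℤ) ≤ 2*n)]
          · rw [if_neg hnm, if_neg (by omega : ¬ 2*n = 2*m)]
      · rw [r01, if_neg (by omega : ¬ 2*n = 2*m+1)]
      · rw [r10, if_neg (by omega : ¬ 2*n+1 = 2*m)]
      · by_cases hz : n = -1 ∧ m = -1
        · obtain ⟨h1, h2⟩ := hz; subst h1; subst h2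
          norm_num
        · rw [r11, ih n m (by omega)]
          by_cases hnm : n = m
          · subst hnm
            rw [if_pos rfl, if_pos rfl]
            by_cases h0 : 0 ≤ n
            · rw [if_pos h0, if_pos (by omega : (0:ℤ) ≤ 2*n+1)]
            · rw [if_neg h0, if_neg (by omega : ¬ (0:ℤ) ≤ 2*n+1)]
          · rw [if_neg hnm, if_neg (by omega : ¬ 2*n+1 = 2*m+1)]
  exact fun p q => key (p.natAbs + q.natAbs) p q le_rfl

lemma antidiagClaim (u : ℤ → ℤ → ℂ)
    (r00 : ∀ n m, u (2*n) (2*m) = 0)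
    (r10 : ∀ n m, u (2*n+1) (2*m) = u n m)
    (r01 : ∀ n m, u (2*n) (2*m+1) = u n m)
    (r11 : ∀ n m, u (2*n+1) (2*m+1) = 0) :
    ∀ p q : ℤ, u p q = if p = -q-1 then (if 0 ≤ q then u (-1) 0 else u 0 (-1)) else 0 := by
  have key : ∀ N : ℕ, ∀ p q : ℤ, p.natAbs + q.natAbs ≤ N →
      u p q = if p = -q-1 then (if 0 ≤ q then u (-1) 0 else u 0 (-1)) else 0 := by
    intro N
    induction N with
    | zero =>
      intro p q hpq
      have hp : p = 0 := by omega
      have hq : q = 0 := by omega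
      subst hp; subst hq
      rw [if_neg (by omega : ¬ (0:ℤ) = -0-1)]
      simpa using r00 0 0
    | succ N ih =>
      intro p q hpq
      obtain ⟨n, hn | hn⟩ : ∃ n : ℤ, p = 2*n ∨ p = 2*n+1 := ⟨p/2, by omega⟩ <;>
        obtain ⟨m, hm | hm⟩ : ∃ m : ℤ, q = 2*m ∨ q = 2*m+1 := ⟨q/2, by omega⟩ <;>
        subst hn <;> subst hm
      · rw [r00, if_neg (by omega : ¬ 2*n = -(2*m)-1)]
      · -- p = 2n, q = 2m+1 : u = u n m, base (0,-1)
        by_cases hz : n = 0 ∧ m = -1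
        · obtain ⟨h1, h2⟩ := hz; subst h1; subst h2
          rw [r01]; norm_num
        · rw [r01, ih n m (by omega)]
          by_cases hnm : n = -m-1
          · rw [if_pos hnm, if_pos (by omega : 2*n = -(2*m+1)-1)]
            by_cases h0 : 0 ≤ m
            · rw [if_pos h0, if_pos (by omega : (0:ℤ) ≤ 2*m+1)]
            · rw [if_neg h0, if_neg (by omega : ¬ (0:ℤ) ≤ 2*m+1)]
          · rw [if_neg hnm, if_neg (by omega : ¬ 2*n = -(2*m+1)-1)]
      · -- p = 2n+1, q = 2m : u = u n m, base (-1,0)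
        by_cases hz : n = -1 ∧ m = 0
        · obtain ⟨h1, h2⟩ := hz; subst h1; subst h2
          rw [r10]; norm_num
        · rw [r10, ih n m (by omega)]
          by_cases hnm : n = -m-1
          · rw [if_pos hnm, if_pos (by omega : 2*n+1 = -(2*m)-1)]
            by_cases h0 : 0 ≤ m
            · rw [if_pos h0, if_pos (by omega : (0:ℤ) ≤ 2*m)]
            · rw [if_neg h0, if_neg (by omega : ¬ (0:ℤ) ≤ 2*m)]
          · rw [if_neg hnm, if_neg (by omega : ¬ 2*n+1 = -(2*m)-1)]
      · rw [r11, if_neg (by omega : ¬ 2*n+1 = -(2*m+1)-1)]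
  exact fun p q => key (p.natAbs + q.natAbs) p q le_rfl


lemma el_ne_zero (q : ℤ) : (el q (1:ℂ) : L2 ℤ ℂ) ≠ 0 := by
  intro h
  simpa [el_apply] using congrArg (fun v : L2 ℤ ℂ => (v : ∀ _:ℤ, ℂ) q) h

lemma adj_mul' (A B : L2 ℤ ℂ →L[ℂ] L2 ℤ ℂ) :
    ContinuousLinearMap.adjoint (A * B) =
      ContinuousLinearMap.adjoint B * ContinuousLinearMap.adjoint A := by
  rw [← ContinuousLinearMap.star_eq_adjoint, ← ContinuousLinearMap.star_eq_adjoint,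
    ← ContinuousLinearMap.star_eq_adjoint, star_mul]

lemma adj_smul' (c : ℂ) (A : L2 ℤ ℂ →L[ℂ] L2 ℤ ℂ) :
    ContinuousLinearMap.adjoint (c • A) = (starRingEnd ℂ) c • ContinuousLinearMap.adjoint A := by
  rw [← ContinuousLinearMap.star_eq_adjoint, ← ContinuousLinearMap.star_eq_adjoint, star_smul]
  rfl

lemma adj_add' (A B : L2 ℤ ℂ →L[ℂ] L2 ℤ ℂ) :
    ContinuousLinearMap.adjoint (A + B) =
      ContinuousLinearMap.adjoint A + ContinuousLinearMap.adjoint B := by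
  rw [← ContinuousLinearMap.star_eq_adjoint, ← ContinuousLinearMap.star_eq_adjoint,
    ← ContinuousLinearMap.star_eq_adjoint, star_add]

lemma smul_one_inject (a b : ℂ) (h : a • (1 : L2 ℤ ℂ →L[ℂ] L2 ℤ ℂ) = b • 1) : a = b := by
  have := congrArg (fun A : L2 ℤ ℂ →L[ℂ] L2 ℤ ℂ => ((A (el 0 1) : L2 ℤ ℂ) : ∀ _:ℤ, ℂ) 0) h
  simp only [ContinuousLinearMap.smul_apply, ContinuousLinearMap.one_apply,
    lp.coeFn_smul, Pi.smul_apply, smul_eq_mul, el_apply] at this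
  simpa using this

lemma conj_mul_self_eq_zero {z : ℂ} (h : (starRingEnd ℂ) z * z = 0) : z = 0 := by
  rw [mul_comm, Complex.mul_conj] at h
  exact_mod_cast Complex.normSq_eq_zero.mp (by exact_mod_cast h)

set_option maxHeartbeats 2000000 in
lemma forward_core (S1 S2 U Sd1 Sd2 Ud : L2 ℤ ℂ →L[ℂ] L2 ℤ ℂ)
    (hS1 : ∀ n : ℤ, S1 (el n (1 : ℂ)) = el (2 * n) (1 : ℂ))
    (hS2 : ∀ n : ℤ, S2 (el n (1 : ℂ)) = el (2 * n + 1) (1 : ℂ))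
    (hadj1 : Sd1 = ContinuousLinearMap.adjoint S1)
    (hadj2 : Sd2 = ContinuousLinearMap.adjoint S2)
    (hadjU : Ud = ContinuousLinearMap.adjoint U)
    (hU1 : Ud * U = 1) (hU2 : U * Ud = 1)
    (hx : ∀ x : L2 ℤ ℂ →L[ℂ] L2 ℤ ℂ,
      U * (S1 * x * Sd1 + S2 * x * Sd2) * Ud =
        S1 * (U * x * Ud) * Sd1 + S2 * (U * x * Ud) * Sd2) :
    ∃ lam mu : ℂ, ‖lam‖ = 1 ∧ ‖mu‖ = 1 ∧
      (((∀ n : ℤ, 0 ≤ n → U (el n (1 : ℂ)) = lam • el n (1 : ℂ)) ∧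
          (∀ n : ℤ, n ≤ -1 → U (el n (1 : ℂ)) = mu • el n (1 : ℂ))) ∨
        ((∀ n : ℤ, 0 ≤ n → U (el n (1 : ℂ)) = lam • el (-n - 1) (1 : ℂ)) ∧
          (∀ n : ℤ, n ≤ -1 → U (el n (1 : ℂ)) = mu • el (-n - 1) (1 : ℂ)))) := by
  have hU1' : ContinuousLinearMap.adjoint U * U = 1 := by rw [← hadjU]; exact hU1
  have hd11 : Sd1 * S1 = 1 := by rw [hadj1]; exact Sd1S1 S1 hS1
  have hd22 : Sd2 * S2 = 1 := by rw [hadj2]; exact Sd2S2 S2 hS2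
  have hd12 : Sd1 * S2 = 0 := by rw [hadj1]; exact Sd1S2 S1 S2 hS1 hS2
  have hd21 : Sd2 * S1 = 0 := by rw [hadj2]; exact Sd2S1 S1 S2 hS1 hS2
  have hrange : S1 * Sd1 + S2 * Sd2 = 1 := by rw [hadj1, hadj2]; exact Srange S1 S2 hS1 hS2
  have cUdU : ∀ A : L2 ℤ ℂ →L[ℂ] L2 ℤ ℂ, Ud * (U * A) = A := fun A => by
    rw [← mul_assoc, hU1, one_mul]
  have cUUd : ∀ A : L2 ℤ ℂ →L[ℂ] L2 ℤ ℂ, U * (Ud * A) = A := fun A => by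
    rw [← mul_assoc, hU2, one_mul]
  have cS1 : ∀ A : L2 ℤ ℂ →L[ℂ] L2 ℤ ℂ, Sd1 * (S1 * A) = A := fun A => by
    rw [← mul_assoc, hd11, one_mul]
  have cS2 : ∀ A : L2 ℤ ℂ →L[ℂ] L2 ℤ ℂ, Sd2 * (S2 * A) = A := fun A => by
    rw [← mul_assoc, hd22, one_mul]
  have cS12 : ∀ A : L2 ℤ ℂ →L[ℂ] L2 ℤ ℂ, Sd1 * (S2 * A) = 0 := fun A => by
    rw [← mul_assoc, hd12, zero_mul]
  have cS21 : ∀ A : L2 ℤ ℂ →L[ℂ] L2 ℤ ℂ, Sd2 * (S1 * A) = 0 := fun A => by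
    rw [← mul_assoc, hd21, zero_mul]
  -- normalized form of the hypothesis
  have hE : ∀ y : L2 ℤ ℂ →L[ℂ] L2 ℤ ℂ,
      U * (S1 * (Ud * (y * (U * (Sd1 * Ud))))) + U * (S2 * (Ud * (y * (U * (Sd2 * Ud))))) =
        S1 * (y * Sd1) + S2 * (y * Sd2) := by
    intro y
    have h := hx (Ud * (y * U))
    simp only [mul_add, add_mul, mul_assoc, cUdU, cUUd] at h
    exact h
  have h2 : ∀ y : L2 ℤ ℂ →L[ℂ] L2 ℤ ℂ, U * (S1 * (Ud * y)) =
      S1 * (y * (Sd1 * (U * (S1 * Ud)))) + S2 * (y * (Sd2 * (U * (S1 * Ud)))) := by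
    intro y
    have h := congrArg (fun A : L2 ℤ ℂ →L[ℂ] L2 ℤ ℂ => A * (U * (S1 * Ud))) (hE y)
    simp only [add_mul, mul_assoc, cUdU, cS1, cS21, hU2, mul_one, mul_zero, zero_mul,
      add_zero, zero_add] at h
    exact h
  have h3 : ∀ y : L2 ℤ ℂ →L[ℂ] L2 ℤ ℂ, U * (S2 * (Ud * y)) =
      S1 * (y * (Sd1 * (U * (S2 * Ud)))) + S2 * (y * (Sd2 * (U * (S2 * Ud)))) := by
    intro y
    have h := congrArg (fun A : L2 ℤ ℂ →L[ℂ] L2 ℤ ℂ => A * (U * (S2 * Ud))) (hE y)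
    simp only [add_mul, mul_assoc, cUdU, cS2, cS12, hU2, mul_one, mul_zero, zero_mul,
      add_zero, zero_add] at h
    exact h
  obtain ⟨a, ha⟩ : ∃ a : ℂ, Sd1 * (U * (S1 * Ud)) = a • 1 := by
    apply commute_all_scalar
    intro y
    have h := congrArg (fun A : L2 ℤ ℂ →L[ℂ] L2 ℤ ℂ => Sd1 * A) (h2 y)
    simp only [mul_add, cS1, cS12, zero_add, add_zero, mul_zero] at h
    simpa only [mul_assoc] using h
  obtain ⟨c, hc⟩ : ∃ c : ℂ, Sd2 * (U * (S1 * Ud)) = c • 1 := by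
    apply commute_all_scalar
    intro y
    have h := congrArg (fun A : L2 ℤ ℂ →L[ℂ] L2 ℤ ℂ => Sd2 * A) (h2 y)
    simp only [mul_add, cS2, cS21, zero_add, add_zero, mul_zero] at h
    simpa only [mul_assoc] using h
  obtain ⟨b, hb⟩ : ∃ b : ℂ, Sd1 * (U * (S2 * Ud)) = b • 1 := by
    apply commute_all_scalar
    intro y
    have h := congrArg (fun A : L2 ℤ ℂ →L[ℂ] L2 ℤ ℂ => Sd1 * A) (h3 y)
    simp only [mul_add, cS1, cS12, zero_add, add_zero, mul_zero] at h
    simpa only [mul_assoc] using h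
  obtain ⟨d, hd⟩ : ∃ d : ℂ, Sd2 * (U * (S2 * Ud)) = d • 1 := by
    apply commute_all_scalar
    intro y
    have h := congrArg (fun A : L2 ℤ ℂ →L[ℂ] L2 ℤ ℂ => Sd2 * A) (h3 y)
    simp only [mul_add, cS2, cS21, zero_add, add_zero, mul_zero] at h
    simpa only [mul_assoc] using h
  have hT1 : U * (S1 * Ud) = a • S1 + c • S2 := by
    calc U * (S1 * Ud) = (S1 * Sd1 + S2 * Sd2) * (U * (S1 * Ud)) := by rw [hrange, one_mul]
    _ = S1 * (Sd1 * (U * (S1 * Ud))) + S2 * (Sd2 * (U * (S1 * Ud))) := by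
        simp only [add_mul, mul_assoc]
    _ = S1 * (a • 1) + S2 * (c • 1) := by rw [ha, hc]
    _ = a • S1 + c • S2 := by simp only [mul_smul_comm, mul_one]
  have hT2 : U * (S2 * Ud) = b • S1 + d • S2 := by
    calc U * (S2 * Ud) = (S1 * Sd1 + S2 * Sd2) * (U * (S2 * Ud)) := by rw [hrange, one_mul]
    _ = S1 * (Sd1 * (U * (S2 * Ud))) + S2 * (Sd2 * (U * (S2 * Ud))) := by
        simp only [add_mul, mul_assoc]
    _ = S1 * (b • 1) + S2 * (d • 1) := by rw [hb, hd]
    _ = b • S1 + d • S2 := by simp only [mul_smul_comm, mul_one]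
  -- adjoint of the T operators
  have hadjT1 : ContinuousLinearMap.adjoint (U * (S1 * Ud)) = U * (Sd1 * Ud) := by
    rw [hadjU, hadj1, adj_mul', adj_mul', ContinuousLinearMap.adjoint_adjoint, mul_assoc]
  have hadjT2 : ContinuousLinearMap.adjoint (U * (S2 * Ud)) = U * (Sd2 * Ud) := by
    rw [hadjU, hadj2, adj_mul', adj_mul', ContinuousLinearMap.adjoint_adjoint, mul_assoc]
  have hadjsum1 : ContinuousLinearMap.adjoint (a • S1 + c • S2) =
      (starRingEnd ℂ) a • Sd1 + (starRingEnd ℂ) c • Sd2 := by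
    rw [adj_add', adj_smul', adj_smul', hadj1, hadj2]
  have hadjsum2 : ContinuousLinearMap.adjoint (b • S1 + d • S2) =
      (starRingEnd ℂ) b • Sd1 + (starRingEnd ℂ) d • Sd2 := by
    rw [adj_add', adj_smul', adj_smul', hadj1, hadj2]
  have honb1 : (starRingEnd ℂ) a * a + (starRingEnd ℂ) c * c = 1 := by
    have h1 : (U * (Sd1 * Ud)) * (U * (S1 * Ud)) = 1 := by
      simp only [mul_assoc, cUdU, cS1]
      exact hU2
    rw [← hadjT1, hT1, hadjsum1] at h1
    simp only [add_mul, mul_add, smul_mul_assoc, mul_smul_comm, smul_smul,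
      hd11, hd22, hd12, hd21, smul_zero, add_zero, zero_add] at h1
    rw [← add_smul] at h1
    have h5 : a * (starRingEnd ℂ) a + c * (starRingEnd ℂ) c = 1 :=
      smul_one_inject _ _ (by rw [h1, one_smul])
    linear_combination h5
  have honb2 : (starRingEnd ℂ) a * b + (starRingEnd ℂ) c * d = 0 := by
    have h1 : (U * (Sd1 * Ud)) * (U * (S2 * Ud)) = 0 := by
      simp only [mul_assoc, cUdU, cS12]
      exact mul_zero U
    rw [← hadjT1, hT1, hT2, hadjsum1] at h1
    simp only [add_mul, mul_add, smul_mul_assoc, mul_smul_comm, smul_smul,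
      hd11, hd22, hd12, hd21, smul_zero, add_zero, zero_add] at h1
    rw [← add_smul] at h1
    have h5 : b * (starRingEnd ℂ) a + d * (starRingEnd ℂ) c = 0 :=
      smul_one_inject _ _ (by rw [h1, zero_smul])
    linear_combination h5
  -- operator recursion
  have hUS1 : U * S1 = (a • S1 + c • S2) * U := by
    have h := congrArg (fun A : L2 ℤ ℂ →L[ℂ] L2 ℤ ℂ => A * U) hT1
    simp only [mul_assoc, hU1, mul_one] at h
    exact h
  have hUS2 : U * S2 = (b • S1 + d • S2) * U := by
    have h := congrArg (fun A : L2 ℤ ℂ →L[ℂ] L2 ℤ ℂ => A * U) hT2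
    simp only [mul_assoc, hU1, mul_one] at h
    exact h
  have e1 : ∀ m : ℤ, U (el (2*m) 1) = a • S1 (U (el m 1)) + c • S2 (U (el m 1)) := by
    intro m
    have h := congrArg (fun A : L2 ℤ ℂ →L[ℂ] L2 ℤ ℂ => A (el m 1)) hUS1
    simp only [ContinuousLinearMap.mul_apply, ContinuousLinearMap.add_apply,
      ContinuousLinearMap.smul_apply] at h
    rw [hS1 m] at h
    exact h
  have e2 : ∀ m : ℤ, U (el (2*m+1) 1) = b • S1 (U (el m 1)) + d • S2 (U (el m 1)) := by
    intro m
    have h := congrArg (fun A : L2 ℤ ℂ →L[ℂ] L2 ℤ ℂ => A (el m 1)) hUS2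
    simp only [ContinuousLinearMap.mul_apply, ContinuousLinearMap.add_apply,
      ContinuousLinearMap.smul_apply] at h
    rw [hS2 m] at h
    exact h
  have r00 : ∀ n m : ℤ, (U (el (2*m) 1) : ∀ _:ℤ, ℂ) (2*n) = a * (U (el m 1) : ∀ _:ℤ, ℂ) n := by
    intro n m
    rw [e1 m, lp.coeFn_add, Pi.add_apply, lp.coeFn_smul, Pi.smul_apply, lp.coeFn_smul,
      Pi.smul_apply, S1_coord_even S1 hS1, S2_coord_even S2 hS2 _ _ (by omega),
      smul_eq_mul, smul_eq_mul, mul_zero, add_zero]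
  have r10 : ∀ n m : ℤ, (U (el (2*m) 1) : ∀ _:ℤ, ℂ) (2*n+1) = c * (U (el m 1) : ∀ _:ℤ, ℂ) n := by
    intro n m
    rw [e1 m, lp.coeFn_add, Pi.add_apply, lp.coeFn_smul, Pi.smul_apply, lp.coeFn_smul,
      Pi.smul_apply, S2_coord_odd S2 hS2, S1_coord_odd S1 hS1 _ _ (by omega),
      smul_eq_mul, smul_eq_mul, mul_zero, zero_add]
  have r01 : ∀ n m : ℤ, (U (el (2*m+1) 1) : ∀ _:ℤ, ℂ) (2*n) = b * (U (el m 1) : ∀ _:ℤ, ℂ) n := by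
    intro n m
    rw [e2 m, lp.coeFn_add, Pi.add_apply, lp.coeFn_smul, Pi.smul_apply, lp.coeFn_smul,
      Pi.smul_apply, S1_coord_even S1 hS1, S2_coord_even S2 hS2 _ _ (by omega),
      smul_eq_mul, smul_eq_mul, mul_zero, add_zero]
  have r11 : ∀ n m : ℤ, (U (el (2*m+1) 1) : ∀ _:ℤ, ℂ) (2*n+1) = d * (U (el m 1) : ∀ _:ℤ, ℂ) n := by
    intro n m
    rw [e2 m, lp.coeFn_add, Pi.add_apply, lp.coeFn_smul, Pi.smul_apply, lp.coeFn_smul,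
      Pi.smul_apply, S2_coord_odd S2 hS2, S1_coord_odd S1 hS1 _ _ (by omega),
      smul_eq_mul, smul_eq_mul, mul_zero, zero_add]
  -- tail relations
  have t00 : (U (el 0 1) : ∀ _:ℤ, ℂ) 0 = a * (U (el 0 1) : ∀ _:ℤ, ℂ) 0 := by
    have h := r00 0 0
    norm_num at h
    exact h
  have t10 : (U (el 0 1) : ∀ _:ℤ, ℂ) (-1) = c * (U (el 0 1) : ∀ _:ℤ, ℂ) (-1) := by
    have h := r10 (-1) 0
    norm_num at h
    exact h
  have t01 : (U (el (-1) 1) : ∀ _:ℤ, ℂ) 0 = b * (U (el (-1) 1) : ∀ _:ℤ, ℂ) 0 := by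
    have h := r01 0 (-1)
    norm_num at h
    exact h
  have t11 : (U (el (-1) 1) : ∀ _:ℤ, ℂ) (-1) = d * (U (el (-1) 1) : ∀ _:ℤ, ℂ) (-1) := by
    have h := r11 (-1) (-1)
    norm_num at h
    exact h
  -- columns are nonzero
  have hcol : ∀ q : ℤ, ∃ p : ℤ, (U (el q 1) : ∀ _:ℤ, ℂ) p ≠ 0 := by
    intro q
    by_contra h
    push_neg at h
    refine U_ne_zero U hU1' (el q 1) (el_ne_zero q) ?_
    apply lp.ext
    funext p
    simpa using h p
  have hnormcol : ∀ q : ℤ, ‖U (el q 1)‖ = 1 := fun q => by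
    rw [U_norm U hU1', norm_el]
  by_cases h00 : (U (el 0 1) : ∀ _:ℤ, ℂ) 0 = 0
  · -- antidiagonal case
    have hm10 : (U (el 0 1) : ∀ _:ℤ, ℂ) (-1) ≠ 0 := by
      obtain ⟨p, hp⟩ := hcol 0
      have rr0 : ∀ n : ℤ, (U (el 0 1) : ∀ _:ℤ, ℂ) (2*n) = a * (U (el 0 1) : ∀ _:ℤ, ℂ) n := by
        intro n; have h := r00 n 0; norm_num at h; exact h
      have rr1 : ∀ n : ℤ, (U (el 0 1) : ∀ _:ℤ, ℂ) (2*n+1) = c * (U (el 0 1) : ∀ _:ℤ, ℂ) n := by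
        intro n; have h := r10 n 0; norm_num at h; exact h
      rcases chainLemma _ a c rr0 rr1 p hp with h | h
      · exact absurd h (by simp [h00])
      · exact h
    have hceq : c = 1 := by
      have h : (c - 1) * (U (el 0 1) : ∀ _:ℤ, ℂ) (-1) = 0 := by linear_combination -t10
      rcases mul_eq_zero.mp h with h | h
      · exact sub_eq_zero.mp h
      · exact absurd h hm10
    have haeq : a = 0 := by
      rw [hceq] at honb1
      simp only [map_one, one_mul] at honb1
      have h : (starRingEnd ℂ) a * a = 0 := by linear_combination honb1
      exact conj_mul_self_eq_zero h
    have hdeq : d = 0 := by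
      rw [haeq, hceq] at honb2
      simpa using honb2
    have h0m1 : (U (el (-1) 1) : ∀ _:ℤ, ℂ) 0 ≠ 0 := by
      obtain ⟨p, hp⟩ := hcol (-1)
      have rr0 : ∀ n : ℤ, (U (el (-1) 1) : ∀ _:ℤ, ℂ) (2*n) = b * (U (el (-1) 1) : ∀ _:ℤ, ℂ) n := by
        intro n; have h := r01 n (-1); norm_num at h; exact h
      have rr1 : ∀ n : ℤ, (U (el (-1) 1) : ∀ _:ℤ, ℂ) (2*n+1) = d * (U (el (-1) 1) : ∀ _:ℤ, ℂ) n := by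
        intro n; have h := r11 n (-1); norm_num at h; exact h
      rcases chainLemma _ b d rr0 rr1 p hp with h | h
      · exact h
      · exfalso
        apply h
        have := rr1 (-1)
        norm_num [hdeq] at this
        exact this
    have hbeq : b = 1 := by
      have h : (b - 1) * (U (el (-1) 1) : ∀ _:ℤ, ℂ) 0 = 0 := by linear_combination -t01
      rcases mul_eq_zero.mp h with h | h
      · exact sub_eq_zero.mp h
      · exact absurd h h0m1
    have R00 : ∀ n m : ℤ, (U (el (2*m) 1) : ∀ _:ℤ, ℂ) (2*n) = 0 := by
      intro n m; rw [r00, haeq, zero_mul]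
    have R10 : ∀ n m : ℤ, (U (el (2*m) 1) : ∀ _:ℤ, ℂ) (2*n+1) =
        (U (el m 1) : ∀ _:ℤ, ℂ) n := by
      intro n m; rw [r10, hceq, one_mul]
    have R01 : ∀ n m : ℤ, (U (el (2*m+1) 1) : ∀ _:ℤ, ℂ) (2*n) =
        (U (el m 1) : ∀ _:ℤ, ℂ) n := by
      intro n m; rw [r01, hbeq, one_mul]
    have R11 : ∀ n m : ℤ, (U (el (2*m+1) 1) : ∀ _:ℤ, ℂ) (2*n+1) = 0 := by
      intro n m; rw [r11, hdeq, zero_mul]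
    have hD : ∀ p q : ℤ, (U (el q 1) : ∀ _:ℤ, ℂ) p =
        if p = -q-1 then (if 0 ≤ q then (U (el 0 1) : ∀ _:ℤ, ℂ) (-1)
          else (U (el (-1) 1) : ∀ _:ℤ, ℂ) 0) else 0 := by
      have h := antidiagClaim (fun p q => (U (el q 1) : ∀ _:ℤ, ℂ) p) R00 R10 R01 R11
      intro p q
      have h2 := h p q
      simpa using h2
    have hvpos : ∀ n : ℤ, 0 ≤ n → U (el n 1) =
        ((U (el 0 1) : ∀ _:ℤ, ℂ) (-1)) • el (-n-1) (1:ℂ) := by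
      intro n hn
      apply lp.ext
      funext p
      rw [lp.coeFn_smul, Pi.smul_apply, el_apply, hD p n]
      by_cases hpn : p = -n-1
      · rw [if_pos hpn, if_pos hn, if_pos hpn, smul_eq_mul, mul_one]
      · rw [if_neg hpn, if_neg hpn, smul_eq_mul, mul_zero]
    have hvneg : ∀ n : ℤ, n ≤ -1 → U (el n 1) =
        ((U (el (-1) 1) : ∀ _:ℤ, ℂ) 0) • el (-n-1) (1:ℂ) := by
      intro n hn
      apply lp.ext
      funext p
      rw [lp.coeFn_smul, Pi.smul_apply, el_apply, hD p n]
      by_cases hpn : p = -n-1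
      · rw [if_pos hpn, if_neg (by omega : ¬ (0:ℤ) ≤ n), if_pos hpn, smul_eq_mul, mul_one]
      · rw [if_neg hpn, if_neg hpn, smul_eq_mul, mul_zero]
    refine ⟨_, _, ?_, ?_, Or.inr ⟨hvpos, hvneg⟩⟩
    · have h := hnormcol 0
      rw [hvpos 0 le_rfl] at h
      rw [norm_smul, norm_el, mul_one] at h
      exact h
    · have h := hnormcol (-1)
      rw [hvneg (-1) le_rfl] at h
      rw [norm_smul, norm_el, mul_one] at h
      exact h
  · -- diagonal case
    have haeq : a = 1 := by
      have h : (a - 1) * (U (el 0 1) : ∀ _:ℤ, ℂ) 0 = 0 := by linear_combination -t00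
      rcases mul_eq_zero.mp h with h | h
      · exact sub_eq_zero.mp h
      · exact absurd h h00
    have hceq : c = 0 := by
      rw [haeq] at honb1
      simp only [map_one, one_mul] at honb1
      have h : (starRingEnd ℂ) c * c = 0 := by linear_combination honb1
      exact conj_mul_self_eq_zero h
    have hbeq : b = 0 := by
      rw [haeq, hceq] at honb2
      simpa using honb2
    have hm1m1 : (U (el (-1) 1) : ∀ _:ℤ, ℂ) (-1) ≠ 0 := by
      obtain ⟨p, hp⟩ := hcol (-1)
      have rr0 : ∀ n : ℤ, (U (el (-1) 1) : ∀ _:ℤ, ℂ) (2*n) = b * (U (el (-1) 1) : ∀ _:ℤ, ℂ) n := by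
        intro n; have h := r01 n (-1); norm_num at h; exact h
      have rr1 : ∀ n : ℤ, (U (el (-1) 1) : ∀ _:ℤ, ℂ) (2*n+1) = d * (U (el (-1) 1) : ∀ _:ℤ, ℂ) n := by
        intro n; have h := r11 n (-1); norm_num at h; exact h
      rcases chainLemma _ b d rr0 rr1 p hp with h | h
      · exfalso
        apply h
        have := rr0 0
        norm_num [hbeq] at this
        exact this
      · exact h
    have hdeq : d = 1 := by
      have h : (d - 1) * (U (el (-1) 1) : ∀ _:ℤ, ℂ) (-1) = 0 := by linear_combination -t11
      rcases mul_eq_zero.mp h with h | h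
      · exact sub_eq_zero.mp h
      · exact absurd h hm1m1
    have R00 : ∀ n m : ℤ, (U (el (2*m) 1) : ∀ _:ℤ, ℂ) (2*n) =
        (U (el m 1) : ∀ _:ℤ, ℂ) n := by
      intro n m; rw [r00, haeq, one_mul]
    have R10 : ∀ n m : ℤ, (U (el (2*m) 1) : ∀ _:ℤ, ℂ) (2*n+1) = 0 := by
      intro n m; rw [r10, hceq, zero_mul]
    have R01 : ∀ n m : ℤ, (U (el (2*m+1) 1) : ∀ _:ℤ, ℂ) (2*n) = 0 := by
      intro n m; rw [r01, hbeq, zero_mul]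
    have R11 : ∀ n m : ℤ, (U (el (2*m+1) 1) : ∀ _:ℤ, ℂ) (2*n+1) =
        (U (el m 1) : ∀ _:ℤ, ℂ) n := by
      intro n m; rw [r11, hdeq, one_mul]
    have hD : ∀ p q : ℤ, (U (el q 1) : ∀ _:ℤ, ℂ) p =
        if p = q then (if 0 ≤ q then (U (el 0 1) : ∀ _:ℤ, ℂ) 0
          else (U (el (-1) 1) : ∀ _:ℤ, ℂ) (-1)) else 0 := by
      have h := diagClaim (fun p q => (U (el q 1) : ∀ _:ℤ, ℂ) p) R00 R10 R01 R11
      intro p q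
      have h2 := h p q
      simpa using h2
    have hvpos : ∀ n : ℤ, 0 ≤ n → U (el n 1) =
        ((U (el 0 1) : ∀ _:ℤ, ℂ) 0) • el n (1:ℂ) := by
      intro n hn
      apply lp.ext
      funext p
      rw [lp.coeFn_smul, Pi.smul_apply, el_apply, hD p n]
      by_cases hpn : p = n
      · rw [if_pos hpn, if_pos hn, if_pos hpn, smul_eq_mul, mul_one]
      · rw [if_neg hpn, if_neg hpn, smul_eq_mul, mul_zero]
    have hvneg : ∀ n : ℤ, n ≤ -1 → U (el n 1) =
        ((U (el (-1) 1) : ∀ _:ℤ, ℂ) (-1)) • el n (1:ℂ) := by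
      intro n hn
      apply lp.ext
      funext p
      rw [lp.coeFn_smul, Pi.smul_apply, el_apply, hD p n]
      by_cases hpn : p = n
      · rw [if_pos hpn, if_neg (by omega : ¬ (0:ℤ) ≤ n), if_pos hpn, smul_eq_mul, mul_one]
      · rw [if_neg hpn, if_neg hpn, smul_eq_mul, mul_zero]
    refine ⟨_, _, ?_, ?_, Or.inl ⟨hvpos, hvneg⟩⟩
    · have h := hnormcol 0
      rw [hvpos 0 le_rfl] at h
      rw [norm_smul, norm_el, mul_one] at h
      exact h
    · have h := hnormcol (-1)
      rw [hvneg (-1) le_rfl] at h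
      rw [norm_smul, norm_el, mul_one] at h
      exact h


end MyAux19

set_option maxHeartbeats 2000000 in
/-- characterization of the unitaries on `ℓ²(ℤ)` commuting with the
endomorphism induced by the Cuntz family `S₁δ_n = δ_{2n}`, `S₂δ_n = δ_{2n+1}`. -/
theorem statement19
    (S1 S2 U : L2 ℤ ℂ →L[ℂ] L2 ℤ ℂ)
    (hS1 : ∀ n : ℤ, S1 (el n (1 : ℂ)) = el (2 * n) (1 : ℂ))
    (hS2 : ∀ n : ℤ, S2 (el n (1 : ℂ)) = el (2 * n + 1) (1 : ℂ))
    (hU1 : ContinuousLinearMap.adjoint U * U = 1)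
    (hU2 : U * ContinuousLinearMap.adjoint U = 1) :
    (∀ x : L2 ℤ ℂ →L[ℂ] L2 ℤ ℂ,
        U * (S1 * x * ContinuousLinearMap.adjoint S1 +
              S2 * x * ContinuousLinearMap.adjoint S2) * ContinuousLinearMap.adjoint U =
          S1 * (U * x * ContinuousLinearMap.adjoint U) * ContinuousLinearMap.adjoint S1 +
            S2 * (U * x * ContinuousLinearMap.adjoint U) * ContinuousLinearMap.adjoint S2) ↔
      ∃ lam mu : ℂ, ‖lam‖ = 1 ∧ ‖mu‖ = 1 ∧
        (((∀ n : ℤ, 0 ≤ n → U (el n (1 : ℂ)) = lam • el n (1 : ℂ)) ∧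
            (∀ n : ℤ, n ≤ -1 → U (el n (1 : ℂ)) = mu • el n (1 : ℂ))) ∨
          ((∀ n : ℤ, 0 ≤ n → U (el n (1 : ℂ)) = lam • el (-n - 1) (1 : ℂ)) ∧
            (∀ n : ℤ, n ≤ -1 → U (el n (1 : ℂ)) = mu • el (-n - 1) (1 : ℂ)))) := by
  have adj_mul : ∀ A B : L2 ℤ ℂ →L[ℂ] L2 ℤ ℂ,
      ContinuousLinearMap.adjoint (A * B) =
        ContinuousLinearMap.adjoint B * ContinuousLinearMap.adjoint A := fun A B => by
    rw [← ContinuousLinearMap.star_eq_adjoint, ← ContinuousLinearMap.star_eq_adjoint,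
      ← ContinuousLinearMap.star_eq_adjoint, star_mul]
  constructor
  · -- forward direction
    intro hx
    exact forward_core S1 S2 U _ _ _ hS1 hS2 rfl rfl rfl hU1 hU2 hx
  · -- backward direction
    rintro ⟨lam, mu, hl, hm, hcase⟩
    have term2 : ∀ (A B A' B' : L2 ℤ ℂ →L[ℂ] L2 ℤ ℂ) (x : L2 ℤ ℂ →L[ℂ] L2 ℤ ℂ),
        U * A = A' * U → B * ContinuousLinearMap.adjoint U = ContinuousLinearMap.adjoint U * B' →
        U * (A * x * B) * ContinuousLinearMap.adjoint U =
          A' * (U * x * ContinuousLinearMap.adjoint U) * B' := by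
      intro A B A' B' x h1 h2
      simp only [mul_assoc]
      rw [h2, ← mul_assoc U A, h1, mul_assoc]
    rcases hcase with ⟨hpos, hneg⟩ | ⟨hpos, hneg⟩
    · -- diagonal case
      have hc1 : U * S1 = S1 * U := by
        apply ext_el
        intro m
        rw [ContinuousLinearMap.mul_apply, ContinuousLinearMap.mul_apply, hS1 m]
        rcases le_or_gt 0 m with h | h
        · rw [hpos m h, hpos (2*m) (by omega), map_smul, hS1 m]
        · rw [hneg m (by omega), hneg (2*m) (by omega), map_smul, hS1 m]
      have hc2 : U * S2 = S2 * U := by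
        apply ext_el
        intro m
        rw [ContinuousLinearMap.mul_apply, ContinuousLinearMap.mul_apply, hS2 m]
        rcases le_or_gt 0 m with h | h
        · rw [hpos m h, hpos (2*m+1) (by omega), map_smul, hS2 m]
        · rw [hneg m (by omega), hneg (2*m+1) (by omega), map_smul, hS2 m]
      have hc1d : ContinuousLinearMap.adjoint S1 * ContinuousLinearMap.adjoint U =
          ContinuousLinearMap.adjoint U * ContinuousLinearMap.adjoint S1 := by
        have := congrArg ContinuousLinearMap.adjoint hc1
        rw [adj_mul, adj_mul] at this
        exact this
      have hc2d : ContinuousLinearMap.adjoint S2 * ContinuousLinearMap.adjoint U =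
          ContinuousLinearMap.adjoint U * ContinuousLinearMap.adjoint S2 := by
        have := congrArg ContinuousLinearMap.adjoint hc2
        rw [adj_mul, adj_mul] at this
        exact this
      intro x
      rw [mul_add, add_mul, term2 S1 (ContinuousLinearMap.adjoint S1) S1
        (ContinuousLinearMap.adjoint S1) x hc1 hc1d,
        term2 S2 (ContinuousLinearMap.adjoint S2) S2 (ContinuousLinearMap.adjoint S2) x hc2 hc2d]
    · -- antidiagonal case
      have hc1 : U * S1 = S2 * U := by
        apply ext_el
        intro m
        rw [ContinuousLinearMap.mul_apply, ContinuousLinearMap.mul_apply, hS1 m]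
        rcases le_or_gt 0 m with h | h
        · rw [hpos m h, hpos (2*m) (by omega), map_smul, hS2 (-m-1),
            show (2*(-m-1)+1 : ℤ) = -(2*m)-1 by ring]
        · rw [hneg m (by omega), hneg (2*m) (by omega), map_smul, hS2 (-m-1),
            show (2*(-m-1)+1 : ℤ) = -(2*m)-1 by ring]
      have hc2 : U * S2 = S1 * U := by
        apply ext_el
        intro m
        rw [ContinuousLinearMap.mul_apply, ContinuousLinearMap.mul_apply, hS2 m]
        rcases le_or_gt 0 m with h | h
        · rw [hpos m h, hpos (2*m+1) (by omega), map_smul, hS1 (-m-1),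
            show (2*(-m-1) : ℤ) = -(2*m+1)-1 by ring]
        · rw [hneg m (by omega), hneg (2*m+1) (by omega), map_smul, hS1 (-m-1),
            show (2*(-m-1) : ℤ) = -(2*m+1)-1 by ring]
      have hc1d : ContinuousLinearMap.adjoint S1 * ContinuousLinearMap.adjoint U =
          ContinuousLinearMap.adjoint U * ContinuousLinearMap.adjoint S2 := by
        have := congrArg ContinuousLinearMap.adjoint hc1
        rw [adj_mul, adj_mul] at this
        exact this
      have hc2d : ContinuousLinearMap.adjoint S2 * ContinuousLinearMap.adjoint U =
          ContinuousLinearMap.adjoint U * ContinuousLinearMap.adjoint S1 := by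
        have := congrArg ContinuousLinearMap.adjoint hc2
        rw [adj_mul, adj_mul] at this
        exact this
      intro x
      rw [mul_add, add_mul, term2 S1 (ContinuousLinearMap.adjoint S1) S2
        (ContinuousLinearMap.adjoint S2) x hc1 hc1d,
        term2 S2 (ContinuousLinearMap.adjoint S2) S1 (ContinuousLinearMap.adjoint S1) x hc2 hc2d]
      exact add_comm _ _
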